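/- arXiv:2510.19613 — 2 statements merged into one kernel-verified Lean document; each statement's English description precedes it below -/
import Mathlib

section
/- Let X be a compact metric space with a continuous action of a group G, K ⊆ X, F a finite subset of G, and U a finite open cover of X with Lebesgue number δ > 0. Then for any δ' ∈ (0, δ/2), N(U_F, K) ≤ spn(d, F, δ', K), where N(U_F, K) is the minimal number of elements of the refined cover U_F = ⋁_{g∈F} g⁻¹U needed to cover K. -/
open Filter Set

/-- If U is a finite open cover with Lebesgue number δ and 0 < δ' < δ/2,
then N(U_F, K) ≤ spn(d, F, δ', K). -/
theorem stmt_2 {X G : Type*} [MetricSpace X] [CompactSpace X] [Group G] [MulAction G X]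
    (hcont : ∀ g : G, Continuous fun x : X => g • x)
    (K : Set X) (F : Finset G)
    (U : Finset (Set X)) (hUopen : ∀ u ∈ U, IsOpen u) (hUcov : ∀ x : X, ∃ u ∈ U, x ∈ u)
    (δ δ' : ℝ) (hδ : 0 < δ)
    (hLeb : ∀ A : Set X, Metric.diam A < δ → ∃ u ∈ U, A ⊆ u)
    (hδ'1 : 0 < δ') (hδ'2 : δ' < δ / 2) :
    sInf {n : ℕ | ∃ C : Finset (Set X),
        (∀ A ∈ C, ∃ u : G → Set X, (∀ g ∈ F, u g ∈ U) ∧ A = {x : X | ∀ g ∈ F, g • x ∈ u g}) ∧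
        (K ⊆ ⋃ A ∈ C, A) ∧ C.card = n} ≤
    sInf {n : ℕ | ∃ E : Finset X,
        (∀ x ∈ K, ∃ y ∈ E, ∀ g ∈ F, dist (g • x) (g • y) < δ') ∧ E.card = n} := by
  classical
  set B := {n : ℕ | ∃ E : Finset X,
      (∀ x ∈ K, ∃ y ∈ E, ∀ g ∈ F, dist (g • x) (g • y) < δ') ∧ E.card = n}
  -- B is nonempty by compactness
  have hBne : B.Nonempty := by
    set V : X → Set X := fun y => {x : X | ∀ g ∈ F, dist (g • x) (g • y) < δ'}
    have hVopen : ∀ y, IsOpen (V y) := by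
      intro y
      have : V y = ⋂ g ∈ F, (fun x : X => g • x) ⁻¹' Metric.ball (g • y) δ' := by
        ext x; simp [V, Metric.mem_ball]
      rw [this]
      exact isOpen_biInter_finset fun g _ => (Metric.isOpen_ball).preimage (hcont g)
    have hVcov : (univ : Set X) ⊆ ⋃ y : X, V y := by
      intro x _
      exact mem_iUnion.2 ⟨x, fun g _ => by simpa using hδ'1⟩
    obtain ⟨t, ht⟩ := isCompact_univ.elim_finite_subcover V hVopen hVcov
    refine ⟨t.card, t, fun x _ => ?_, rfl⟩
    obtain ⟨y, hy, hxy⟩ := mem_iUnion₂.1 (ht (mem_univ x))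
    exact ⟨y, hy, hxy⟩
  obtain ⟨E, hEspan, hEcard⟩ := Nat.sInf_mem hBne
  -- for each center y and g, pick a cover element containing ball (g•y) δ'
  have hball : ∀ (y : X) (g : G), ∃ u ∈ U, Metric.ball (g • y) δ' ⊆ u := by
    intro y g
    apply hLeb
    calc Metric.diam (Metric.ball (g • y) δ') ≤ 2 * δ' := Metric.diam_ball hδ'1.le
      _ < δ := by linarith
  choose u hu hub using hball
  set C : Finset (Set X) := E.image (fun y => {x : X | ∀ g ∈ F, g • x ∈ u y g})
  have hmem : C.card ∈ {n : ℕ | ∃ C : Finset (Set X),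
      (∀ A ∈ C, ∃ u : G → Set X, (∀ g ∈ F, u g ∈ U) ∧ A = {x : X | ∀ g ∈ F, g • x ∈ u g}) ∧
      (K ⊆ ⋃ A ∈ C, A) ∧ C.card = n} := by
    refine ⟨C, ?_, ?_, rfl⟩
    · intro A hA
      obtain ⟨y, _, rfl⟩ := Finset.mem_image.1 hA
      exact ⟨u y, fun g _ => hu y g, rfl⟩
    · intro x hx
      obtain ⟨y, hy, hxy⟩ := hEspan x hx
      refine mem_iUnion₂.2 ⟨{x : X | ∀ g ∈ F, g • x ∈ u y g},
        Finset.mem_image.2 ⟨y, hy, rfl⟩, fun g hg => ?_⟩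
      exact hub y g (Metric.mem_ball.2 (hxy g hg))
  calc sInf _ ≤ C.card := Nat.sInf_le hmem
    _ ≤ E.card := Finset.card_image_le
    _ = sInf B := hEcard
end

section
/- (Constructing a subset with prescribed separated-set growth rate) Let X be a compact metric space, G a countable group acting continuously on X, and {F_n} an increasing sequence of finite subsets of G with e_G ∈ F_1 and |F_n| → ∞. Let K₀ ⊆ X be a countable compact set with unique limit point x₀, let δ > 0 and 0 < h be such that h_sep(d, δ, K₀) := limsup_n (1/|F_n|) log sep(d, F_n, δ, K₀) > h. Then there exists a countable compact subset A ⊆ K₀ with unique limit point x₀ such that h_sep(d, δ, A) = h. -/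
set_option linter.unusedSectionVars false
set_option linter.unusedVariables false

open Filter Set

variable {X G : Type*}

/-- Maximal cardinality of an (F,ε)-separated subset of K. -/
noncomputable def sepCard [MetricSpace X] [Group G] [MulAction G X] (F : Finset G) (ε : ℝ)
    (K : Set X) : ℕ :=
  sSup {n : ℕ | ∃ D : Finset X, ↑D ⊆ K ∧
    (∀ x ∈ D, ∀ y ∈ D, x ≠ y → ∃ g ∈ F, ε ≤ dist (g • x) (g • y)) ∧ D.card = n}

/-- h_sep(d, ε, K) = limsup_n (1/|F_n|) log sep(d, F_n, ε, K). -/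
noncomputable def hSep [MetricSpace X] [Group G] [MulAction G X] (Fn : ℕ → Finset G) (ε : ℝ)
    (K : Set X) : ℝ :=
  Filter.limsup (fun n => Real.log (sepCard (Fn n) ε K : ℕ) / ((Fn n).card : ℝ)) Filter.atTop

section Aux

variable [MetricSpace X] [CompactSpace X] [Group G] [MulAction G X]

/-- separated predicate -/
def IsSep (F : Finset G) (ε : ℝ) (D : Finset X) : Prop :=
  ∀ x ∈ D, ∀ y ∈ D, x ≠ y → ∃ g ∈ F, ε ≤ dist (g • x) (g • y)

lemma IsSep.subset {F : Finset G} {ε : ℝ} {D E : Finset X} (hDE : D ⊆ E) (hE : IsSep F ε E) :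
    IsSep F ε D := fun x hx y hy hxy => hE x (hDE hx) y (hDE hy) hxy

lemma sepSet_nonempty (F : Finset G) (ε : ℝ) (K : Set X) :
    {n : ℕ | ∃ D : Finset X, ↑D ⊆ K ∧ IsSep F ε D ∧ D.card = n}.Nonempty :=
  ⟨0, ∅, by simp, fun x hx => absurd hx (by simp), rfl⟩

lemma card_le_of_isSep (hcont : ∀ g : G, Continuous fun x : X => g • x) (F : Finset G) {ε : ℝ}
    (hε : 0 < ε) : ∃ N : ℕ, ∀ D : Finset X, IsSep F ε D → D.card ≤ N := by
  classical
  set U : X → Set X := fun x => ⋂ g ∈ F, (fun y : X => g • y) ⁻¹' Metric.ball (g • x) (ε / 2)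
    with hU
  have hUmem : ∀ x y : X, y ∈ U x ↔ ∀ g ∈ F, dist (g • y) (g • x) < ε / 2 := by
    intro x y
    simp [hU, Metric.mem_ball]
  have hUopen : ∀ x, IsOpen (U x) := fun x =>
    isOpen_biInter_finset fun g _ => (hcont g).isOpen_preimage _ Metric.isOpen_ball
  have hmem : ∀ x, x ∈ U x := fun x => (hUmem x x).2 fun g _ => by simp [hε]
  obtain ⟨t, ht⟩ :=
    isCompact_univ.elim_finite_subcover U hUopen (fun x _ => mem_iUnion.2 ⟨x, hmem x⟩)
  refine ⟨t.card, fun D hD => ?_⟩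
  have hcover : ∀ y : X, ∃ z, z ∈ t ∧ y ∈ U z := by
    intro y
    have := ht (mem_univ y)
    simpa [mem_iUnion₂, and_comm] using this
  choose c hc1 hc2 using hcover
  refine Finset.card_le_card_of_injOn c (fun y _ => hc1 y) ?_
  intro y1 hy1 y2 hy2 hcc
  by_contra hne
  obtain ⟨g, hg, hdist⟩ := hD y1 hy1 y2 hy2 hne
  have h1 : dist (g • y1) (g • c y1) < ε / 2 := (hUmem _ _).1 (hc2 y1) g hg
  have h2 : dist (g • y2) (g • c y1) < ε / 2 := by
    rw [hcc]; exact (hUmem _ _).1 (hc2 y2) g hg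
  have := dist_triangle (g • y1) (g • c y1) (g • y2)
  rw [dist_comm (g • c y1) (g • y2)] at this
  linarith

lemma bddAbove_sepSet (hcont : ∀ g : G, Continuous fun x : X => g • x) (F : Finset G) {ε : ℝ}
    (hε : 0 < ε) (K : Set X) :
    BddAbove {n : ℕ | ∃ D : Finset X, ↑D ⊆ K ∧ IsSep F ε D ∧ D.card = n} := by
  obtain ⟨N, hN⟩ := card_le_of_isSep hcont F hε
  exact ⟨N, fun n ⟨D, _, hsep, hcard⟩ => hcard ▸ hN D hsep⟩

lemma sepCard_eq (F : Finset G) (ε : ℝ) (K : Set X) :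
    sepCard F ε K = sSup {n : ℕ | ∃ D : Finset X, ↑D ⊆ K ∧ IsSep F ε D ∧ D.card = n} := rfl

lemma le_sepCard (hcont : ∀ g : G, Continuous fun x : X => g • x) {F : Finset G} {ε : ℝ}
    (hε : 0 < ε) {K : Set X} {D : Finset X} (hD : ↑D ⊆ K) (hsep : IsSep F ε D) :
    D.card ≤ sepCard F ε K := by
  rw [sepCard_eq]
  exact le_csSup (bddAbove_sepSet hcont F hε K) ⟨D, hD, hsep, rfl⟩

lemma exists_sepCard (hcont : ∀ g : G, Continuous fun x : X => g • x) (F : Finset G) {ε : ℝ}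
    (hε : 0 < ε) (K : Set X) :
    ∃ D : Finset X, ↑D ⊆ K ∧ IsSep F ε D ∧ D.card = sepCard F ε K := by
  have := Nat.sSup_mem (sepSet_nonempty F ε K) (bddAbove_sepSet hcont F hε K)
  rw [sepCard_eq]
  exact this

lemma sepCard_le (hcont : ∀ g : G, Continuous fun x : X => g • x) {F : Finset G} {ε : ℝ}
    (hε : 0 < ε) {K : Set X} {B : ℕ}
    (hB : ∀ D : Finset X, ↑D ⊆ K → IsSep F ε D → D.card ≤ B) : sepCard F ε K ≤ B := by
  rw [sepCard_eq]
  exact csSup_le (sepSet_nonempty F ε K) fun n ⟨D, h1, h2, h3⟩ => h3 ▸ hB D h1 h2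

lemma near (hcont : ∀ g : G, Continuous fun x : X => g • x) (F : Finset G) (x : X) {ε : ℝ}
    (hε : 0 < ε) :
    ∃ r > 0, ∀ y : X, dist y x < r → ∀ g ∈ F, dist (g • y) (g • x) < ε := by
  have hev : ∀ᶠ y in nhds x, ∀ g ∈ F, dist (g • y) (g • x) < ε := by
    rw [Filter.eventually_all_finset]
    intro g _
    exact Metric.tendsto_nhds.1 ((hcont g).continuousAt) ε hε
  rw [Metric.eventually_nhds_iff] at hev
  obtain ⟨r, hr, hrr⟩ := hev
  exact ⟨r, hr, fun y hy => hrr hy⟩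

lemma finite_outside {K₀ : Set X} (hK₀cpt : IsCompact K₀) {x₀ : X}
    (hacc : ∀ x : X, AccPt x (Filter.principal K₀) ↔ x = x₀) {U : Set X} (hU : IsOpen U)
    (hx : x₀ ∈ U) : (K₀ \ U).Finite := by
  by_contra hinf
  obtain ⟨x, hx'⟩ := Set.Infinite.exists_accPt_principal hinf
  have h1 : x = x₀ := (hacc x).1 (hx'.mono (principal_mono.2 diff_subset))
  have h2 : x ∈ closure (K₀ \ U) := mem_closure_iff_clusterPt.2 (AccPt.clusterPt hx')
  have h3 : closure (K₀ \ U) ⊆ Uᶜ :=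
    closure_minimal (fun y hy => hy.2) hU.isClosed_compl
  exact h3 h2 (h1 ▸ hx)

end Aux

set_option maxHeartbeats 1600000 in
/-- constructing a subset with prescribed separated-set growth rate. -/
theorem stmt_12 [MetricSpace X] [CompactSpace X] [Group G] [Countable G] [MulAction G X]
    (hcont : ∀ g : G, Continuous fun x : X => g • x)
    (Fn : ℕ → Finset G) (hmono : ∀ n, Fn n ⊆ Fn (n + 1)) (h1 : (1 : G) ∈ Fn 0)
    (hcard : Tendsto (fun n => (Fn n).card) atTop atTop)
    (K₀ : Set X) (hK₀ctble : K₀.Countable) (hK₀cpt : IsCompact K₀)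
    (x₀ : X) (hacc : ∀ x : X, AccPt x (Filter.principal K₀) ↔ x = x₀)
    (δ h : ℝ) (hδ : 0 < δ) (hh : 0 < h) (hlt : h < hSep Fn δ K₀) :
    ∃ A : Set X, A ⊆ K₀ ∧ A.Countable ∧ IsCompact A ∧
      (∀ x : X, AccPt x (Filter.principal A) ↔ x = x₀) ∧ hSep Fn δ A = h := by
  classical
  -- basic facts about Fn
  have hchain : ∀ {a b : ℕ}, a ≤ b → Fn a ⊆ Fn b := by
    intro a b hab
    induction hab with
    | refl => exact Finset.Subset.refl _
    | step _ ih => exact ih.trans (hmono _)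
  have hFpos : ∀ n, 0 < ((Fn n).card : ℝ) := by
    intro n
    exact_mod_cast Finset.card_pos.2 ⟨1, hchain (Nat.zero_le n) h1⟩
  have hFcard : ∀ {a b : ℕ}, a ≤ b → (Fn a).card ≤ (Fn b).card :=
    fun hab => Finset.card_le_card (hchain hab)
  have hx₀acc : AccPt x₀ (Filter.principal K₀) := (hacc x₀).2 rfl
  have hx₀K : x₀ ∈ K₀ := by
    have := mem_closure_iff_clusterPt.2 (AccPt.clusterPt hx₀acc)
    rwa [hK₀cpt.isClosed.closure_eq] at this
  -- the quantity Nf l i = ⌊exp(h |F_l|)⌋ + i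
  set Nf : ℕ → ℕ → ℕ := fun l i => ⌊Real.exp (h * (Fn l).card)⌋₊ + i with hNf
  have hNf_mono : ∀ {a b : ℕ} (i : ℕ), a ≤ b → Nf a i ≤ Nf b i := by
    intro a b i hab
    have : Real.exp (h * (Fn a).card) ≤ Real.exp (h * (Fn b).card) := by
      apply Real.exp_le_exp.2
      have : ((Fn a).card : ℝ) ≤ (Fn b).card := by exact_mod_cast hFcard hab
      nlinarith [hh.le]
    exact Nat.add_le_add_right (Nat.floor_le_floor this) i
  have hNf_le : ∀ l i, (Nf l i : ℝ) ≤ Real.exp (h * (Fn l).card) + i := by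
    intro l i
    have := Nat.floor_le (Real.exp_pos (h * (Fn l).card)).le
    push_cast [hNf]
    linarith
  have hNf_ge : ∀ l i, 1 ≤ i → Real.exp (h * (Fn l).card) ≤ (Nf l i : ℝ) := by
    intro l i hi
    have h1 := Nat.lt_floor_add_one (Real.exp (h * (Fn l).card))
    have : (1 : ℝ) ≤ i := by exact_mod_cast hi
    push_cast [hNf]
    linarith
  -- sepCard of K₀ is at least 1 and the normalized logs are nonnegative
  have hsep_one : ∀ (F : Finset G) (K : Set X), x₀ ∈ K → 1 ≤ sepCard F δ K := by
    intro F K hK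
    have : ({x₀} : Finset X).card ≤ sepCard F δ K := by
      apply le_sepCard hcont hδ (by simpa using hK)
      intro x hx y hy hxy
      simp only [Finset.mem_singleton] at hx hy
      exact absurd (hx.trans hy.symm) hxy
    simpa using this
  have hu_nonneg : ∀ (K : Set X), x₀ ∈ K → ∀ n,
      0 ≤ Real.log (sepCard (Fn n) δ K : ℕ) / ((Fn n).card : ℝ) := by
    intro K hK n
    apply div_nonneg _ (hFpos n).le
    apply Real.log_nonneg
    exact_mod_cast hsep_one (Fn n) K hK
  -- Key: frequently there are large separated sets in K₀
  have key : ∀ C i m : ℕ, ∃ l, m ≤ l ∧ C + Nf l i < sepCard (Fn l) δ K₀ := by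
    intro C i m
    set h' : ℝ := (h + hSep Fn δ K₀) / 2 with hh'def
    have hh1 : h < h' := by simp only [hh'def]; linarith
    have hh2 : h' < hSep Fn δ K₀ := by simp only [hh'def]; linarith
    have hcb : IsCoboundedUnder (· ≤ ·) atTop
        (fun n => Real.log (sepCard (Fn n) δ K₀ : ℕ) / ((Fn n).card : ℝ)) :=
      isCoboundedUnder_le_of_le atTop (hu_nonneg K₀ hx₀K)
    have hfreq : ∃ᶠ n in atTop,
        h' < Real.log (sepCard (Fn n) δ K₀ : ℕ) / ((Fn n).card : ℝ) :=
      frequently_lt_of_lt_limsup hcb hh2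
    have hev : ∀ᶠ l in atTop, (C + i + 1 : ℝ) + 1 ≤ Real.exp ((h' - h) * (Fn l).card) := by
      have htend : Tendsto (fun l => Real.exp ((h' - h) * ((Fn l).card : ℝ))) atTop atTop := by
        apply Real.tendsto_exp_atTop.comp
        apply Tendsto.comp (tendsto_id.const_mul_atTop (by linarith : (0:ℝ) < h' - h))
        exact tendsto_natCast_atTop_atTop.comp hcard
      exact htend.eventually_ge_atTop _
    obtain ⟨l, hlm, hl1, hl2⟩ := frequently_atTop.1 (hfreq.and_eventually hev) m
    refine ⟨l, hlm, ?_⟩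
    have hsep1 : (1 : ℝ) ≤ (sepCard (Fn l) δ K₀ : ℕ) := by
      exact_mod_cast hsep_one (Fn l) K₀ hx₀K
    have hlog : h' * (Fn l).card < Real.log (sepCard (Fn l) δ K₀ : ℕ) := by
      exact (lt_div_iff₀ (hFpos l)).1 hl1
    have hexp : Real.exp (h' * (Fn l).card) < (sepCard (Fn l) δ K₀ : ℕ) := by
      rw [← Real.exp_log (by linarith : (0:ℝ) < (sepCard (Fn l) δ K₀ : ℕ))]
      exact Real.exp_lt_exp.2 hlog
    have hsplit : Real.exp (h' * (Fn l).card)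
        = Real.exp (h * (Fn l).card) * Real.exp ((h' - h) * (Fn l).card) := by
      rw [← Real.exp_add]; ring_nf
    have hbig : (C : ℝ) + i + 1 + Real.exp (h * (Fn l).card)
        ≤ Real.exp (h' * (Fn l).card) := by
      rw [hsplit]
      have he1 : (1:ℝ) ≤ Real.exp (h * (Fn l).card) := Real.one_le_exp (by positivity)
      nlinarith
    have : (C + Nf l i : ℝ) < (sepCard (Fn l) δ K₀ : ℕ) := by
      have := hNf_le l i
      push_cast
      push_cast at this
      nlinarith
    exact_mod_cast this
  -- Step construction: given i and a bound p, produce m, l, A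
  have step : ∀ i p : ℕ, ∃ (m l : ℕ) (A : Finset X),
      p < m ∧ (i + 2) ^ 2 ≤ (Fn m).card ∧ m ≤ l ∧ ↑A ⊆ K₀ ∧
      (∀ x ∈ A, x ≠ x₀ ∧ dist x x₀ < 1 / (i + 1 : ℝ) ∧
        ∀ g ∈ Fn m, dist (g • x) (g • x₀) < δ / 2) ∧
      IsSep (Fn l) δ A ∧ A.card = Nf l (i + 1) ∧
      (∀ n, m ≤ n → n < l → ∀ D : Finset X, D ⊆ A → IsSep (Fn n) δ D →
        D.card < Nf n (i + 1)) := by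
    intro i p
    obtain ⟨M, hM⟩ := eventually_atTop.1 (hcard.eventually_ge_atTop ((i + 2) ^ 2))
    set m := max M (p + 1) with hm
    have hpm : p < m := lt_of_lt_of_le (Nat.lt_succ_self p) (le_max_right _ _)
    have hMcard : (i + 2) ^ 2 ≤ (Fn m).card := hM m (le_max_left _ _)
    obtain ⟨r, hr0, hrnear⟩ := near hcont (Fn m) x₀ (half_pos hδ)
    have hipos : (0 : ℝ) < 1 / (i + 1 : ℝ) := by positivity
    set W : Set X := {x | x ∈ K₀ ∧ x ≠ x₀ ∧ dist x x₀ < 1 / (i + 1 : ℝ) ∧ dist x x₀ < r}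
      with hW
    have hWsub : W ⊆ K₀ := fun x hx => hx.1
    have hWfin : (K₀ \ W).Finite := by
      have hfin := finite_outside hK₀cpt hacc (Metric.isOpen_ball
        (x := x₀) (ε := min (1 / (i + 1 : ℝ)) r))
        (Metric.mem_ball_self (lt_min hipos hr0))
      apply (hfin.union (Set.finite_singleton x₀)).subset
      rintro x ⟨hxK, hxW⟩
      by_cases hx0 : x = x₀
      · exact Or.inr hx0
      · left
        refine ⟨hxK, fun hxb => hxW ?_⟩
        rw [Metric.mem_ball, lt_min_iff] at hxb
        exact ⟨hxK, hx0, hxb.1, hxb.2⟩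
    set C := hWfin.toFinset.card with hC
    have hPex : ∃ l, m ≤ l ∧ Nf l (i + 1) ≤ sepCard (Fn l) δ W := by
      obtain ⟨l₀, hl₀m, hl₀⟩ := key C (i + 1) m
      refine ⟨l₀, hl₀m, ?_⟩
      obtain ⟨D, hDsub, hDsep, hDcard⟩ := exists_sepCard hcont (Fn l₀) hδ K₀
      set D' := D.filter (fun x => x ∈ W) with hD'
      have hD'sub : ↑D' ⊆ W := fun x hx => (Finset.mem_filter.1 (Finset.mem_coe.1 hx)).2
      have hD'sep : IsSep (Fn l₀) δ D' := IsSep.subset (Finset.filter_subset _ _) hDsep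
      have h2 : (D.filter (fun x => ¬ x ∈ W)).card ≤ C := by
        apply Finset.card_le_card
        intro x hx
        rw [Set.Finite.mem_toFinset]
        rcases Finset.mem_filter.1 hx with ⟨hxD, hxW⟩
        exact ⟨hDsub hxD, hxW⟩
      have hsplit : D'.card + (D.filter (fun x => ¬ x ∈ W)).card = D.card :=
        Finset.card_filter_add_card_filter_not _
      have hle := le_sepCard hcont hδ hD'sub hD'sep
      omega
    set l := Nat.find hPex with hldef
    obtain ⟨hml, hlsep⟩ := Nat.find_spec hPex
    obtain ⟨E, hEsub, hEsep, hEcard⟩ := exists_sepCard hcont (Fn l) hδ W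
    obtain ⟨A, hAE, hAcard⟩ := Finset.exists_subset_card_eq (hEcard ▸ hlsep :
      Nf l (i + 1) ≤ E.card)
    have hAW : ↑A ⊆ W := fun x hx => hEsub (Finset.mem_coe.2 (hAE (Finset.mem_coe.1 hx)))
    refine ⟨m, l, A, hpm, hMcard, hml, hAW.trans hWsub, ?_, IsSep.subset hAE hEsep, hAcard, ?_⟩
    · intro x hx
      obtain ⟨hxK, hx0, hxd, hxr⟩ := hAW (Finset.mem_coe.2 hx)
      exact ⟨hx0, hxd, hrnear x hxr⟩
    · intro n hmn hnl D hDA hDsep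
      have hnP := Nat.find_min hPex hnl
      push_neg at hnP
      have hlt' := hnP hmn
      have : D.card ≤ sepCard (Fn n) δ W := by
        apply le_sepCard hcont hδ _ hDsep
        exact fun x hx => hAW (Finset.mem_coe.2 (hDA (Finset.mem_coe.1 hx)))
      omega
  -- Recursive choice of the stages
  choose m' l' A' hs1 hs2 hs3 hs4 hs5 hs6 hs7 hs8 using step
  set L : ℕ → ℕ := fun n => Nat.rec 0 (fun j prev => l' j prev) n with hL
  set mi : ℕ → ℕ := fun i => m' i (L i) with hmi
  set li : ℕ → ℕ := fun i => l' i (L i) with hli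
  set Ai : ℕ → Finset X := fun i => A' i (L i) with hAi
  have hLsucc : ∀ i, L (i + 1) = li i := fun i => rfl
  have hml : ∀ i, mi i ≤ li i := fun i => hs3 i (L i)
  have hLm : ∀ i, L i < mi i := fun i => hs1 i (L i)
  have hLstrict : StrictMono L := strictMono_nat_of_lt_succ fun i => by
    rw [hLsucc]; exact lt_of_lt_of_le (hLm i) (hml i)
  have hlimi : ∀ i j, i < j → li i < mi j := by
    intro i j hij
    calc li i = L (i + 1) := (hLsucc i).symm
    _ ≤ L j := hLstrict.monotone hij
    _ < mi j := hLm j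
  have hmistrict : StrictMono mi := strictMono_nat_of_lt_succ fun i =>
    lt_of_le_of_lt (hml i) (hlimi i (i + 1) (Nat.lt_succ_self i))
  have hmi_ge : ∀ i, i < mi i := fun i => lt_of_le_of_lt (hLstrict.le_apply) (hLm i)
  have hcardmi : ∀ i, (i + 2) ^ 2 ≤ (Fn (mi i)).card := fun i => hs2 i (L i)
  have hAiK : ∀ i, ↑(Ai i) ⊆ K₀ := fun i => hs4 i (L i)
  have hpts : ∀ i, ∀ x ∈ Ai i, x ≠ x₀ ∧ dist x x₀ < 1 / (i + 1 : ℝ) ∧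
      ∀ g ∈ Fn (mi i), dist (g • x) (g • x₀) < δ / 2 := fun i => hs5 i (L i)
  have hsepAi : ∀ i, IsSep (Fn (li i)) δ (Ai i) := fun i => hs6 i (L i)
  have hcardAi : ∀ i, (Ai i).card = Nf (li i) (i + 1) := fun i => hs7 i (L i)
  have hmin : ∀ i n, mi i ≤ n → n < li i → ∀ D : Finset X, D ⊆ Ai i → IsSep (Fn n) δ D →
      D.card < Nf n (i + 1) := fun i => hs8 i (L i)
  -- the set A
  set A : Set X := {x₀} ∪ ⋃ i, (↑(Ai i) : Set X) with hA
  have hx₀A : x₀ ∈ A := Or.inl rfl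
  have hAK : A ⊆ K₀ := by
    apply union_subset (by simpa using hx₀K)
    exact iUnion_subset fun i => hAiK i
  have hActble : A.Countable :=
    (countable_singleton x₀).union (countable_iUnion fun i => (Ai i).countable_toSet)
  -- outside every ball around x₀, A is finite
  have hAsmall : ∀ r : ℝ, 0 < r → (A \ Metric.ball x₀ r).Finite := by
    intro r hr
    obtain ⟨n, hn⟩ := exists_nat_one_div_lt hr
    apply Set.Finite.subset ((Set.finite_Iio n).biUnion fun i _ => (Ai i).finite_toSet)
    rintro x ⟨hxA, hxb⟩
    rcases hxA with hx0 | hxU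
    · rw [mem_singleton_iff] at hx0
      exact absurd (by simp [hx0, Metric.mem_ball, hr]) hxb
    · obtain ⟨i, hxi⟩ := mem_iUnion.1 hxU
      refine mem_biUnion (?_ : i ∈ Set.Iio n) hxi
      by_contra hin
      simp only [Set.mem_Iio, not_lt] at hin
      apply hxb
      rw [Metric.mem_ball]
      have hd := (hpts i x (Finset.mem_coe.1 hxi)).2.1
      have : 1 / (i + 1 : ℝ) ≤ 1 / (n + 1 : ℝ) := by
        apply one_div_le_one_div_of_le (by positivity)
        have : (n : ℝ) ≤ i := by exact_mod_cast hin
        linarith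
      linarith
  have hAclosed : IsClosed A := by
    apply isClosed_of_closure_subset
    intro x hx
    by_cases hx0 : x = x₀
    · rw [hx0]; exact hx₀A
    · have hr : 0 < dist x x₀ := dist_pos.2 hx0
      have hcl : closure A ⊆ (A \ Metric.ball x₀ (dist x x₀ / 2)) ∪
          Metric.closedBall x₀ (dist x x₀ / 2) := by
        apply closure_minimal _ (IsClosed.union (hAsmall _ (by linarith)).isClosed
          Metric.isClosed_closedBall)
        intro y hy
        by_cases hyb : y ∈ Metric.ball x₀ (dist x x₀ / 2)
        · exact Or.inr (Metric.ball_subset_closedBall hyb)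
        · exact Or.inl ⟨hy, hyb⟩
      rcases hcl hx with hx1 | hx2
      · exact hx1.1
      · exfalso
        rw [Metric.mem_closedBall] at hx2
        linarith
  have hAcpt : IsCompact A := hAclosed.isCompact
  have hAiNe : ∀ i, ∃ y, y ∈ Ai i := by
    intro i
    apply Finset.card_pos.1
    rw [hcardAi i]
    simp [hNf]
  have hAacc : ∀ x : X, AccPt x (Filter.principal A) ↔ x = x₀ := by
    intro x
    constructor
    · intro hxacc
      by_contra hne
      have hr : 0 < dist x x₀ := dist_pos.2 hne
      set F : Set X := A \ Metric.ball x₀ (dist x x₀ / 2) with hF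
      have hFfin : F.Finite := hAsmall _ (by linarith)
      have hU : (Metric.ball x (dist x x₀ / 2) ∩ (F \ {x})ᶜ) ∈ nhds x := by
        apply inter_mem (Metric.isOpen_ball.mem_nhds (Metric.mem_ball_self (by linarith)))
        apply ((hFfin.subset diff_subset).isClosed).isOpen_compl.mem_nhds
        simp
      obtain ⟨y, ⟨⟨hyb, hyF⟩, hyA⟩, hyx⟩ := accPt_iff_nhds.1 hxacc _ hU
      apply hyF
      have hdyx : dist y x < dist x x₀ / 2 := Metric.mem_ball.1 hyb
      have htri := dist_triangle x y x₀
      refine ⟨⟨hyA, ?_⟩, by simpa using hyx⟩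
      rw [Metric.mem_ball]
      rw [dist_comm x y] at htri
      push_neg
      linarith
    · rintro rfl
      rw [accPt_iff_nhds]
      intro U hU
      obtain ⟨ε, hε, hball⟩ := Metric.mem_nhds_iff.1 hU
      obtain ⟨n, hn⟩ := exists_nat_one_div_lt hε
      obtain ⟨y, hy⟩ := hAiNe n
      obtain ⟨hy0, hyd, -⟩ := hpts n y hy
      refine ⟨y, ⟨hball ?_, Or.inr (mem_iUnion.2 ⟨n, hy⟩)⟩, hy0⟩
      rw [Metric.mem_ball]
      linarith
  refine ⟨A, hAK, hActble, hAcpt, hAacc, ?_⟩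
  -- the entropy computation
  set u : ℕ → ℝ := fun n => Real.log (sepCard (Fn n) δ A : ℕ) / ((Fn n).card : ℝ) with hu
  have hsepdef : hSep Fn δ A = Filter.limsup u atTop := rfl
  -- combinatorial upper bound
  have bound : ∀ i n, mi i ≤ n → n < mi (i + 1) →
      sepCard (Fn n) δ A ≤ 1 + Nf n (i + 1) + ∑ j ∈ Finset.range i, Nf (li j) (j + 1) := by
    intro i n hmn hnm
    apply sepCard_le hcont hδ
    intro D hDA hDsep
    set P1 : X → Prop := fun x => x = x₀ ∨ ∃ j, i + 1 ≤ j ∧ x ∈ Ai j with hP1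
    have hclose : ∀ x, P1 x → ∀ g ∈ Fn n, dist (g • x) (g • x₀) < δ / 2 ∨ x = x₀ := by
      intro x hx g hg
      rcases hx with rfl | ⟨j, hj, hxj⟩
      · exact Or.inr rfl
      · left
        have hsubF : Fn n ⊆ Fn (mi j) :=
          hchain (le_of_lt (lt_of_lt_of_le hnm (hmistrict.monotone hj)))
        exact (hpts j x hxj).2.2 g (hsubF hg)
    have hc1 : (D.filter P1).card ≤ 1 := by
      rw [Finset.card_le_one]
      intro a ha b hb
      by_contra hab
      rcases Finset.mem_filter.1 ha with ⟨haD, haP⟩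
      rcases Finset.mem_filter.1 hb with ⟨hbD, hbP⟩
      obtain ⟨g, hg, hdist⟩ := hDsep a haD b hbD hab
      have hca := hclose a haP g hg
      have hcb := hclose b hbP g hg
      have htri := dist_triangle (g • a) (g • x₀) (g • b)
      rw [dist_comm (g • x₀) (g • b)] at htri
      rcases hca with hca | ha0 <;> rcases hcb with hcb | hb0
      · linarith
      · rw [hb0] at hdist
        linarith
      · rw [ha0] at hdist
        rw [dist_comm] at hdist
        linarith
      · exact hab (ha0.trans hb0.symm)
    have hD2sub : (D.filter (fun x => ¬ P1 x)).filter (fun x => x ∈ Ai i) ⊆ Ai i :=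
      fun x hx => (Finset.mem_filter.1 hx).2
    have hD2sep : IsSep (Fn n) δ ((D.filter (fun x => ¬ P1 x)).filter (fun x => x ∈ Ai i)) :=
      IsSep.subset ((Finset.filter_subset _ _).trans (Finset.filter_subset _ _)) hDsep
    have hc2 : ((D.filter (fun x => ¬ P1 x)).filter (fun x => x ∈ Ai i)).card
        ≤ Nf n (i + 1) := by
      rcases lt_or_ge n (li i) with hcase | hcase
      · exact le_of_lt (hmin i n hmn hcase _ hD2sub hD2sep)
      · calc ((D.filter (fun x => ¬ P1 x)).filter (fun x => x ∈ Ai i)).card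
            ≤ (Ai i).card := Finset.card_le_card hD2sub
          _ = Nf (li i) (i + 1) := hcardAi i
          _ ≤ Nf n (i + 1) := hNf_mono _ hcase
    have hc3 : ((D.filter (fun x => ¬ P1 x)).filter (fun x => ¬ x ∈ Ai i)).card
        ≤ ∑ j ∈ Finset.range i, Nf (li j) (j + 1) := by
      have hsub3 : (D.filter (fun x => ¬ P1 x)).filter (fun x => ¬ x ∈ Ai i)
          ⊆ (Finset.range i).biUnion Ai := by
        intro x hx
        rcases Finset.mem_filter.1 hx with ⟨hx', hxAi⟩
        rcases Finset.mem_filter.1 hx' with ⟨hxD, hxP⟩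
        have hxA := hDA (Finset.mem_coe.2 hxD)
        rcases hxA with hx0 | hxU
        · exact absurd (Or.inl (by simpa using hx0)) hxP
        · obtain ⟨j, hxj⟩ := mem_iUnion.1 hxU
          have hxj' : x ∈ Ai j := Finset.mem_coe.1 hxj
          rw [Finset.mem_biUnion]
          refine ⟨j, Finset.mem_range.2 ?_, hxj'⟩
          rcases lt_trichotomy j i with hj | rfl | hj
          · exact hj
          · exact absurd hxj' hxAi
          · exact absurd (Or.inr ⟨j, hj, hxj'⟩) hxP
      calc ((D.filter (fun x => ¬ P1 x)).filter (fun x => ¬ x ∈ Ai i)).card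
          ≤ ((Finset.range i).biUnion Ai).card := Finset.card_le_card hsub3
        _ ≤ ∑ j ∈ Finset.range i, (Ai j).card := Finset.card_biUnion_le
        _ = ∑ j ∈ Finset.range i, Nf (li j) (j + 1) :=
            Finset.sum_congr rfl fun j _ => hcardAi j
    have e1 := Finset.card_filter_add_card_filter_not (s := D) (p := P1)
    have e2 := Finset.card_filter_add_card_filter_not
      (s := D.filter (fun x => ¬ P1 x)) (p := fun x => x ∈ Ai i)
    omega
  -- analytic upper bound
  have hub : ∀ i n, mi i ≤ n → n < mi (i + 1) →
      u n ≤ h + 2 * Real.log ((i : ℝ) + 2) / ((i : ℝ) + 2) ^ 2 := by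
    intro i n hmn hnm
    have hcn : ((i : ℝ) + 2) ^ 2 ≤ ((Fn n).card : ℝ) := by
      have := (hcardmi i).trans (hFcard hmn)
      exact_mod_cast this
    have h2pos : (0 : ℝ) < ((i : ℝ) + 2) ^ 2 := by positivity
    have hexp1 : (1 : ℝ) ≤ Real.exp (h * (Fn n).card) := Real.one_le_exp (by positivity)
    have hsum : (∑ j ∈ Finset.range i, (Nf (li j) (j + 1) : ℝ))
        ≤ i * (Real.exp (h * (Fn n).card) + i) := by
      calc (∑ j ∈ Finset.range i, (Nf (li j) (j + 1) : ℝ))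
          ≤ ∑ j ∈ Finset.range i, (Real.exp (h * (Fn n).card) + i) := by
            apply Finset.sum_le_sum
            intro j hj
            have hj' := Finset.mem_range.1 hj
            have hle1 := hNf_le (li j) (j + 1)
            have hle2 : Real.exp (h * (Fn (li j)).card) ≤ Real.exp (h * (Fn n).card) := by
              apply Real.exp_le_exp.2
              have : ((Fn (li j)).card : ℝ) ≤ (Fn n).card := by
                exact_mod_cast hFcard ((hlimi j i hj').le.trans hmn)
              nlinarith [hh.le]
            have : ((j : ℝ) + 1) ≤ i := by
              have : (j : ℝ) + 1 ≤ i := by exact_mod_cast hj'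
              exact this
            push_cast at hle1 ⊢
            linarith
        _ = i * (Real.exp (h * (Fn n).card) + i) := by
            rw [Finset.sum_const, Finset.card_range, nsmul_eq_mul]
    have hbig : (sepCard (Fn n) δ A : ℝ) ≤ ((i : ℝ) + 2) ^ 2 * Real.exp (h * (Fn n).card) := by
      have hb := bound i n hmn hnm
      have hb' : (sepCard (Fn n) δ A : ℝ)
          ≤ 1 + (Nf n (i + 1) : ℝ) + ∑ j ∈ Finset.range i, (Nf (li j) (j + 1) : ℝ) := by
        exact_mod_cast hb
      have hle1 := hNf_le n (i + 1)
      push_cast at hle1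
      have hi0 : (0:ℝ) ≤ (i : ℝ) := Nat.cast_nonneg i
      nlinarith [mul_nonneg hi0 hi0, mul_nonneg hi0 (sub_nonneg.2 hexp1),
        mul_nonneg (mul_nonneg hi0 hi0) (sub_nonneg.2 hexp1), sub_nonneg.2 hexp1]
    have hspos : (1 : ℝ) ≤ (sepCard (Fn n) δ A : ℕ) := by
      exact_mod_cast hsep_one (Fn n) A hx₀A
    have hlog : Real.log (sepCard (Fn n) δ A : ℕ)
        ≤ h * (Fn n).card + 2 * Real.log ((i : ℝ) + 2) := by
      have := Real.log_le_log (by linarith) hbig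
      rw [Real.log_mul (by positivity) (Real.exp_ne_zero _), Real.log_exp] at this
      rw [Real.log_pow] at this
      push_cast at this
      linarith
    have hlam : 0 ≤ 2 * Real.log ((i : ℝ) + 2) := by
      have := Real.log_nonneg (by linarith : (1:ℝ) ≤ (i : ℝ) + 2)
      linarith
    rw [hu]
    simp only
    rw [div_le_iff₀ (hFpos n)]
    have e : 2 * Real.log ((i : ℝ) + 2) / ((i : ℝ) + 2) ^ 2 * (((i : ℝ) + 2) ^ 2)
        = 2 * Real.log ((i : ℝ) + 2) := div_mul_cancel₀ _ h2pos.ne'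
    have hmul := mul_le_mul_of_nonneg_left hcn
      (div_nonneg hlam h2pos.le)
    nlinarith [hFpos n]
  -- upper bound for the limsup
  have hupper : ∀ ε : ℝ, 0 < ε → ∀ᶠ n in atTop, u n ≤ h + ε := by
    intro ε hε
    obtain ⟨I, hI⟩ := exists_nat_gt (2 / ε)
    have hIbound : ∀ i : ℕ, I ≤ i → 2 * Real.log ((i : ℝ) + 2) / ((i : ℝ) + 2) ^ 2 ≤ ε := by
      intro i hi
      have hi2 : (0:ℝ) < (i:ℝ) + 2 := by positivity
      have hlogle : Real.log ((i:ℝ)+2) ≤ (i:ℝ)+2 := Real.log_le_self hi2.le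
      have hIi : (I : ℝ) ≤ i := by exact_mod_cast hi
      have hkey : (2:ℝ) < ε * ((i:ℝ)+2) := by
        have h2 : 2/ε < (i:ℝ)+2 := lt_of_lt_of_le hI (by linarith)
        rw [div_lt_iff₀ hε] at h2
        linarith
      have hfrac : 2 * Real.log ((i:ℝ)+2) / ((i:ℝ)+2)^2 ≤ 2 / ((i:ℝ)+2) := by
        rw [div_le_div_iff₀ (by positivity) hi2]
        have hlognn := Real.log_nonneg (by linarith : (1:ℝ) ≤ (i:ℝ)+2)
        nlinarith
      have hfin : 2 / ((i:ℝ)+2) ≤ ε := by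
        rw [div_le_iff₀ hi2]
        linarith
      linarith
    rw [eventually_atTop]
    refine ⟨mi I, fun n hn => ?_⟩
    have hex : ∃ j, n < mi j := ⟨n + 1, lt_trans (Nat.lt_succ_self n) (hmi_ge (n+1))⟩
    have hjspec : n < mi (Nat.find hex) := Nat.find_spec hex
    have hjne : Nat.find hex ≠ 0 := by
      intro h0
      rw [h0] at hjspec
      have := hmistrict.monotone (Nat.zero_le I)
      omega
    obtain ⟨i, hieq⟩ := Nat.exists_eq_succ_of_ne_zero hjne
    rw [Nat.succ_eq_add_one] at hieq
    rw [hieq] at hjspec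
    have hi_le : mi i ≤ n := by
      have := Nat.find_min hex (by omega : i < Nat.find hex)
      omega
    have hiI : I ≤ i := by
      by_contra hiI'
      push_neg at hiI'
      have : mi (i+1) ≤ mi I := hmistrict.monotone hiI'
      omega
    exact le_trans (hub i n hi_le hjspec) (by linarith [hIbound i hiI])
  have hA_cb : IsCoboundedUnder (· ≤ ·) atTop u :=
    isCoboundedUnder_le_of_le atTop (hu_nonneg A hx₀A)
  have hA_bdd : IsBoundedUnder (· ≤ ·) atTop u :=
    isBoundedUnder_of_eventually_le (hupper 1 one_pos)
  have hge : h ≤ hSep Fn δ A := by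
    rw [hsepdef]
    apply le_limsup_of_frequently_le _ hA_bdd
    rw [frequently_atTop]
    intro a
    refine ⟨li a, le_trans (le_of_lt (hmi_ge a)) (hml a), ?_⟩
    have hsub : ↑(Ai a) ⊆ A := fun x hx => Or.inr (mem_iUnion.2 ⟨a, hx⟩)
    have hsepa := le_sepCard hcont hδ hsub (hsepAi a)
    rw [hcardAi a] at hsepa
    have hformula : Real.exp (h * (Fn (li a)).card) ≤ (sepCard (Fn (li a)) δ A : ℕ) := by
      calc Real.exp (h * (Fn (li a)).card) ≤ (Nf (li a) (a+1) : ℝ) :=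
            hNf_ge _ _ (Nat.succ_le_succ (Nat.zero_le a))
        _ ≤ _ := by exact_mod_cast hsepa
    have hloga : h * (Fn (li a)).card ≤ Real.log (sepCard (Fn (li a)) δ A : ℕ) := by
      have := Real.log_le_log (Real.exp_pos _) hformula
      rwa [Real.log_exp] at this
    rw [hu]
    simp only
    rw [le_div_iff₀ (hFpos (li a))]
    exact hloga
  have hle' : hSep Fn δ A ≤ h := by
    rw [hsepdef]
    by_contra hgt
    push_neg at hgt
    have hε : 0 < (limsup u atTop - h) / 2 := by linarith
    have := limsup_le_of_le hA_cb (hupper _ hε)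
    linarith
  linarith [hge, hle']
end
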